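/- Let d ≥ 1 and let (u_i)_{i=1}^{d²} be a SIC system on ℂ^d. Then for any complex coefficients a_1, …, a_{d²}, the squared norm ‖Σ_i a_i (u_i ⊗ ū_i)‖² equals (1/(d+1))·|Σ_i a_i|² + (d/(d+1))·Σ_i |a_i|². -/

import Mathlib

open scoped BigOperators ComplexInnerProductSpace
open Matrix MeasureTheory

noncomputable section

/-- `ℂ^d` with the standard Hermitian inner product. -/
abbrev V (d : ℕ) : Type := EuclideanSpace ℂ (Fin d)

/-- `ℂ^d ⊗ ℂ^d`, identified with functions on `Fin d × Fin d`. -/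
abbrev V2 (d : ℕ) : Type := EuclideanSpace ℂ (Fin d × Fin d)

/-- operators on `ℂ^d ⊗ ℂ^d`, as matrices. -/
abbrev Op2 (d : ℕ) : Type := Matrix (Fin d × Fin d) (Fin d × Fin d) ℂ

/-- tensor (Kronecker) product of vectors. -/
def tens {d : ℕ} (u v : V d) : V2 d := WithLp.toLp 2 (fun p => u p.1 * v p.2)

/-- entrywise complex conjugate `ū` of a vector. -/
def cvec {d : ℕ} (u : V d) : V d := WithLp.toLp 2 (fun k => starRingEnd ℂ (u k))

/-- the maximally entangled state `φ⁰ = (1/√d) Σ_k e_k ⊗ e_k`. -/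
def phi0 (d : ℕ) : V2 d := WithLp.toLp 2 (fun p => if p.1 = p.2 then ((Real.sqrt d : ℂ))⁻¹ else 0)

/-- the rank-one operator `|w⟩⟨w|`. -/
def outer {d : ℕ} (w : V2 d) : Op2 d := Matrix.of fun p q => w p * starRingEnd ℂ (w q)

/-- `T_inv = |φ⁰⟩⟨φ⁰| + (1/(d+1))(I - |φ⁰⟩⟨φ⁰|)`. -/
def Tinv (d : ℕ) : Op2 d := outer (phi0 d) + (1 / ((d : ℂ) + 1)) • (1 - outer (phi0 d))


/-- A SIC system on `ℂ^d`: `d²` unit vectors with `|⟨u_i, u_j⟩|² = 1/(d+1)` for `i ≠ j`. -/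
def IsSIC {d : ℕ} (u : Fin (d ^ 2) → V d) : Prop :=
  (∀ i, ‖u i‖ = 1) ∧ ∀ i j, i ≠ j → ‖⟪u i, u j⟫‖ ^ 2 = 1 / (d + 1)

lemma inner_tens {d : ℕ} (u v : V d) :
    (⟪tens u (cvec u), tens v (cvec v)⟫ : ℂ) = ⟪u, v⟫ * starRingEnd ℂ ⟪u, v⟫ := by
  simp only [PiLp.inner_apply, RCLike.inner_apply, tens, cvec, PiLp.toLp_apply, _root_.map_mul, _root_.map_sum]
  rw [Fintype.sum_prod_type, Finset.sum_mul_sum]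
  congr 1; ext k; congr 1; ext l
  simp [RingHomInvPair.comp_apply_eq]
  ring

/-- `‖Σ_i a_i (u_i ⊗ ū_i)‖² = (1/(d+1))|Σ_i a_i|² + (d/(d+1)) Σ_i |a_i|²`. -/
theorem stmt2 (d : ℕ) (hd : 1 ≤ d) (u : Fin (d ^ 2) → V d) (hu : IsSIC u)
    (a : Fin (d ^ 2) → ℂ) :
    ‖∑ i, a i • tens (u i) (cvec (u i))‖ ^ 2 =
      (1 / (d + 1)) * ‖∑ i, a i‖ ^ 2
        + ((d : ℝ) / (d + 1)) * ∑ i, ‖a i‖ ^ 2 := by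
  have hd1 : ((d : ℂ) + 1) ≠ 0 := Nat.cast_add_one_ne_zero d
  have hG : ∀ i j, (⟪u i, u j⟫ : ℂ) * starRingEnd ℂ ⟪u i, u j⟫ =
      (1/((d:ℂ)+1)) + (if i = j then (d:ℂ)/((d:ℂ)+1) else 0) := by
    intro i j
    by_cases h : i = j
    · subst h
      have h2 : (⟪u i, u i⟫ : ℂ) = 1 := by
        rw [inner_self_eq_norm_sq_to_K, hu.1 i]; norm_num
      rw [h2, if_pos rfl, _root_.map_one, mul_one]
      field_simp; ring
    · rw [Complex.mul_conj, if_neg h]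
      have := hu.2 i j h
      rw [← Complex.sq_norm, this]
      push_cast
      simp
  set S := ∑ i, a i • tens (u i) (cvec (u i)) with hS
  have key : (⟪S, S⟫ : ℂ) =
      (1/((d:ℂ)+1)) * (starRingEnd ℂ (∑ i, a i) * ∑ i, a i)
        + ((d:ℂ)/((d:ℂ)+1)) * ∑ i, starRingEnd ℂ (a i) * a i := by
    rw [hS, sum_inner]
    simp only [inner_sum, inner_smul_left, inner_smul_right, inner_tens, hG, mul_add,
      Finset.sum_add_distrib, mul_ite, mul_zero, Finset.sum_ite_eq, Finset.mem_univ, if_true]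
    rw [_root_.map_sum, Finset.sum_mul_sum, Finset.mul_sum, Finset.mul_sum]
    congr 1
    · apply Finset.sum_congr rfl; intro x _
      rw [Finset.mul_sum]
      apply Finset.sum_congr rfl; intro y _; ring
    · apply Finset.sum_congr rfl; intro x _; ring
  have hre : ‖S‖ ^ 2 = Complex.re ⟪S, S⟫ := InnerProductSpace.norm_sq_eq_re_inner (𝕜 := ℂ) S
  rw [hre, key]
  have e1 : starRingEnd ℂ (∑ i, a i) * ∑ i, a i = ((‖∑ i, a i‖ ^ 2 : ℝ) : ℂ) := by
    rw [mul_comm, Complex.mul_conj, Complex.normSq_eq_norm_sq]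
  have e2 : ∑ i, starRingEnd ℂ (a i) * a i = ((∑ i, ‖a i‖ ^ 2 : ℝ) : ℂ) := by
    push_cast
    apply Finset.sum_congr rfl; intro i _
    rw [mul_comm, Complex.mul_conj, Complex.normSq_eq_norm_sq]; push_cast; ring
  rw [e1, e2]
  have heq : ((1:ℂ)/((d:ℂ)+1)) * ((‖∑ i, a i‖ ^ 2 : ℝ) : ℂ)
        + ((d:ℂ)/((d:ℂ)+1)) * ((∑ i, ‖a i‖ ^ 2 : ℝ) : ℂ)
      = (((1 / (d + 1)) * ‖∑ i, a i‖ ^ 2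
        + ((d : ℝ) / (d + 1)) * ∑ i, ‖a i‖ ^ 2 : ℝ) : ℂ) := by
    push_cast; ring
  rw [heq, Complex.ofReal_re]
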